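/- There exists a universal constant C > 0 with the following property: for every point x₀ ∈ ℝ⁴, every radius ρ > 0, and every positive C² function v on the open Euclidean ball B(x₀, ρ) ⊂ ℝ⁴ satisfying the differential inequality Δv ≥ 2v³ on B(x₀, ρ), one has v(x₀)·ρ ≤ C. (This is the Euclidean model of Step 1 in the paper's boundary blow-up analysis: the rescaled conformal factors v̄ᵢ satisfy −Δv̄ᵢ + (R/6)·v̄ᵢ = −2v̄ᵢ³ with scalar curvature R ≥ 0, hence Δv̄ᵢ ≥ 2v̄ᵢ³, and the cut-off maximum-principle argument at a maximum point of v·r·η yields the bound v(x)·dist(x, ∂X) ≤ C.) -/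

import Mathlib

open Filter Metric Set
open scoped Topology

/-- The Euclidean Laplacian on `ℝ⁴`: the sum of the pure second partial derivatives. -/
noncomputable def lap (v : EuclideanSpace ℝ (Fin 4) → ℝ) (x : EuclideanSpace ℝ (Fin 4)) : ℝ :=
  ∑ i : Fin 4,
    iteratedFDeriv ℝ 2 v x ![EuclideanSpace.single i (1 : ℝ), EuclideanSpace.single i (1 : ℝ)]


/-- Second derivative test at a local max. -/
lemma second_deriv_test {g : ℝ → ℝ} {c : ℝ}
    (hmax : IsLocalMax g 0)
    (hdiff : ∀ᶠ t in 𝓝 (0:ℝ), DifferentiableAt ℝ g t)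
    (h2 : HasDerivAt (deriv g) c 0) : c ≤ 0 := by
  by_contra hc
  push_neg at hc
  have h0 : deriv g 0 = 0 := hmax.deriv_eq_zero
  have hslope : Tendsto (slope (deriv g) 0) (𝓝[≠] 0) (𝓝 c) :=
    hasDerivAt_iff_tendsto_slope.1 h2
  have hpos0 : ∀ᶠ t in 𝓝[≠] (0:ℝ), 0 < slope (deriv g) 0 t :=
    hslope.eventually (eventually_gt_nhds hc)
  have hpos : ∀ᶠ t in 𝓝 (0:ℝ), t ≠ 0 → 0 < slope (deriv g) 0 t :=
    eventually_nhdsWithin_iff.mp hpos0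
  have hloc : ∀ᶠ t in 𝓝 (0:ℝ), g t ≤ g 0 := hmax
  have Hall : ∀ᶠ t in 𝓝 (0:ℝ),
      (t ≠ 0 → 0 < slope (deriv g) 0 t) ∧ g t ≤ g 0 ∧ DifferentiableAt ℝ g t :=
    hpos.and (hloc.and hdiff)
  rw [Metric.eventually_nhds_iff] at Hall
  obtain ⟨ε, hε, hH⟩ := Hall
  set t₀ := ε / 2 with ht₀def
  have ht₀ : 0 < t₀ := by positivity
  have hmem : ∀ x ∈ Icc (0:ℝ) t₀, dist x 0 < ε := by
    intro x hx
    rw [Real.dist_eq, sub_zero, abs_of_nonneg hx.1]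
    calc x ≤ t₀ := hx.2
      _ < ε := by simp [ht₀def]; linarith
  have hcont : ContinuousOn g (Icc 0 t₀) := fun x hx =>
    ((hH (hmem x hx)).2.2).continuousAt.continuousWithinAt
  have hderiv : ∀ x ∈ Ioo (0:ℝ) t₀, HasDerivAt g (deriv g x) x := fun x hx =>
    ((hH (hmem x ⟨hx.1.le, hx.2.le⟩)).2.2).hasDerivAt
  obtain ⟨ξ, hξ, hξeq⟩ := exists_hasDerivAt_eq_slope g (deriv g) ht₀ hcont hderiv
  have hξpos : 0 < deriv g ξ := by
    have h := (hH (hmem ξ ⟨hξ.1.le, hξ.2.le⟩)).1 (ne_of_gt hξ.1)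
    rw [slope_def_field, h0, sub_zero, sub_zero] at h
    have : 0 < deriv g ξ / ξ := h
    rcases div_pos_iff.mp this with h | h
    · exact h.1
    · exact absurd hξ.1 (not_lt.mpr h.2.le)
  have hgle : g t₀ ≤ g 0 := (hH (hmem t₀ ⟨ht₀.le, le_rfl⟩)).2.1
  rw [hξeq] at hξpos
  have ht' : 0 < t₀ - 0 := by linarith
  have := (div_pos_iff.mp hξpos)
  rcases this with h | h
  · linarith [h.1]
  · linarith [h.2, ht']


lemma line_deriv_bridge {E : Type*} [NormedAddCommGroup E] [NormedSpace ℝ E]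
    {f : E → ℝ} {x : E} (e : E) (hf : ContDiffAt ℝ 2 f x) :
    (∀ᶠ t in 𝓝 (0:ℝ), DifferentiableAt ℝ (fun t : ℝ => f (x + t • e)) t) ∧
    HasDerivAt (deriv (fun t : ℝ => f (x + t • e))) (iteratedFDeriv ℝ 2 f x ![e, e]) 0 := by
  have hline : ∀ t : ℝ, HasDerivAt (fun s : ℝ => x + s • e) e t := by
    intro t
    simpa using ((hasDerivAt_id t).smul_const e).const_add x
  have hline0 : x = x + (0:ℝ) • e := by simp
  have hev0 : ∀ᶠ y in 𝓝 x, ContDiffAt ℝ 2 f y := hf.eventually (by norm_num)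
  have hev : ∀ᶠ t in 𝓝 (0:ℝ), ContDiffAt ℝ 2 f (x + t • e) := by
    have hcont : Tendsto (fun s : ℝ => x + s • e) (𝓝 0) (𝓝 x) := by
      have := (hline 0).continuousAt
      rw [ContinuousAt] at this
      simpa using this
    exact hcont.eventually hev0
  have hgdiff : ∀ᶠ t in 𝓝 (0:ℝ),
      HasDerivAt (fun s : ℝ => f (x + s • e)) (fderiv ℝ f (x + t • e) e) t := by
    filter_upwards [hev] with t ht
    exact ((ht.differentiableAt (by norm_num)).hasFDerivAt).comp_hasDerivAt t (hline t)
  have hfd : DifferentiableAt ℝ (fderiv ℝ f) x :=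
    (hf.fderiv_right (le_refl 2) : ContDiffAt ℝ 1 (fderiv ℝ f) x).differentiableAt (by norm_num)
  have h2' : HasDerivAt (fun t : ℝ => fderiv ℝ f (x + t • e))
      (fderiv ℝ (fderiv ℝ f) x e) 0 :=
    hfd.hasFDerivAt.comp_hasDerivAt_of_eq 0 (hline 0) hline0
  have h2'' : HasDerivAt (fun t : ℝ => fderiv ℝ f (x + t • e) e)
      (fderiv ℝ (fderiv ℝ f) x e e) 0 := by
    simpa using h2'.clm_apply (hasDerivAt_const 0 e)
  have hder_eq : deriv (fun s : ℝ => f (x + s • e)) =ᶠ[𝓝 (0:ℝ)]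
      fun t => fderiv ℝ f (x + t • e) e := by
    filter_upwards [hgdiff] with t ht using ht.deriv
  refine ⟨hgdiff.mono fun t ht => ht.differentiableAt, ?_⟩
  have : iteratedFDeriv ℝ 2 f x ![e, e] = fderiv ℝ (fderiv ℝ f) x e e := by
    rw [iteratedFDeriv_two_apply]
    simp
  rw [this]
  exact h2''.congr_of_eventuallyEq hder_eq


lemma q_second_deriv {r b c : ℝ} (hc : 0 < c) :
    (∀ᶠ t in 𝓝 (0:ℝ), DifferentiableAt ℝ (fun t : ℝ => 2*r/(c - 2*b*t - t^2)) t) ∧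
    HasDerivAt (deriv (fun t : ℝ => 2*r/(c - 2*b*t - t^2)))
      (4*r/c^2 + 16*r*b^2/c^3) 0 := by
  have hD : ∀ t : ℝ, HasDerivAt (fun t : ℝ => c - 2*b*t - t^2) (-(2*b) - 2*t) t := by
    intro t
    have h1 : HasDerivAt (fun t : ℝ => 2*b*t) (2*b) t := by
      simpa using (hasDerivAt_id t).const_mul (2*b)
    have h2 : HasDerivAt (fun t : ℝ => t^2) (2*t) t := by
      simpa using hasDerivAt_pow 2 t
    exact (((hasDerivAt_const t c).sub h1).sub h2).congr_deriv (by ring)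
  have hDpos : ∀ᶠ t in 𝓝 (0:ℝ), 0 < c - 2*b*t - t^2 := by
    have h := (hD 0).continuousAt
    rw [ContinuousAt] at h
    have h0 : c - 2*b*(0:ℝ) - (0:ℝ)^2 = c := by ring
    rw [h0] at h
    exact h.eventually (eventually_gt_nhds hc)
  have hq : ∀ᶠ t in 𝓝 (0:ℝ), HasDerivAt (fun t : ℝ => 2*r/(c - 2*b*t - t^2))
      ((4*r*b + 4*r*t)/(c - 2*b*t - t^2)^2) t := by
    filter_upwards [hDpos] with t ht
    have h := (hasDerivAt_const t (2*r)).div (hD t) (ne_of_gt ht)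
    exact h.congr_deriv (by ring)
  have hNum : HasDerivAt (fun t : ℝ => 4*r*b + 4*r*t) (4*r) 0 := by
    simpa using ((hasDerivAt_id (0:ℝ)).const_mul (4*r)).const_add (4*r*b)
  have hDen : HasDerivAt (fun t : ℝ => (c - 2*b*t - t^2)^2)
      (2 * (c - 2*b*(0:ℝ) - (0:ℝ)^2) ^ 1 * (-(2*b) - 2*(0:ℝ))) 0 := (hD 0).pow 2
  have hden0 : (c - 2*b*(0:ℝ) - (0:ℝ)^2)^2 ≠ 0 := by
    have : c - 2*b*(0:ℝ) - (0:ℝ)^2 = c := by ring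
    rw [this]
    positivity
  have hF : HasDerivAt (fun t : ℝ => (4*r*b + 4*r*t)/(c - 2*b*t - t^2)^2)
      (4*r/c^2 + 16*r*b^2/c^3) 0 := by
    have h := hNum.div hDen hden0
    have hcne : c ≠ 0 := ne_of_gt hc
    refine h.congr_deriv ?_
    rw [show c - 2*b*(0:ℝ) - (0:ℝ)^2 = c by ring]
    rw [div_add_div _ _ (pow_ne_zero _ hcne) (pow_ne_zero _ hcne),
      div_eq_div_iff (pow_ne_zero _ (pow_ne_zero _ hcne))
        (mul_ne_zero (pow_ne_zero _ hcne) (pow_ne_zero _ hcne))]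
    ring
  have hder_eq : deriv (fun t : ℝ => 2*r/(c - 2*b*t - t^2)) =ᶠ[𝓝 (0:ℝ)]
      fun t : ℝ => (4*r*b + 4*r*t)/(c - 2*b*t - t^2)^2 := by
    filter_upwards [hq] with t ht using ht.deriv
  exact ⟨hq.mono fun t ht => ht.differentiableAt, hF.congr_of_eventuallyEq hder_eq⟩

lemma sum_coord_sq (y : EuclideanSpace ℝ (Fin 4)) : ∑ i, (y i)^2 = ‖y‖^2 := by
  rw [EuclideanSpace.norm_eq, Real.sq_sqrt (by positivity)]
  simp [Real.norm_eq_abs, sq_abs]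

lemma core_bound {x₀ : EuclideanSpace ℝ (Fin 4)} {ρ ρ' : ℝ}
    {v : EuclideanSpace ℝ (Fin 4) → ℝ}
    (hρ' : 0 < ρ') (hρρ : ρ' < ρ)
    (hv : ContDiffOn ℝ 2 v (Metric.ball x₀ ρ))
    (hpos : ∀ x ∈ Metric.ball x₀ ρ, 0 < v x)
    (hlap : ∀ x ∈ Metric.ball x₀ ρ, 2 * (v x) ^ 3 ≤ lap v x) :
    v x₀ * ρ' ≤ 2 := by
  by_contra hcon
  push_neg at hcon
  have hρ : 0 < ρ := hρ'.trans hρρ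
  have hx₀ : x₀ ∈ ball x₀ ρ := mem_ball_self hρ
  have hv0 : 0 < v x₀ := hpos x₀ hx₀
  have hρ'ne : ρ' ≠ 0 := ne_of_gt hρ'
  have hsub : closedBall x₀ ρ' ⊆ ball x₀ ρ := closedBall_subset_ball hρρ
  have hvc : ContinuousOn v (closedBall x₀ ρ') := (hv.continuousOn).mono hsub
  obtain ⟨xm, hxm, hxmax⟩ := (isCompact_closedBall x₀ ρ').exists_isMaxOn
    ⟨x₀, mem_closedBall_self hρ'.le⟩ hvc
  set M := v xm with hMdef
  have hMpos : 0 < M := lt_of_lt_of_le hv0 (hxmax (mem_closedBall_self hρ'.le))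
  set δ := min (ρ'^2/2) (ρ'/M) with hδdef
  have hδpos : 0 < δ := lt_min (by positivity) (by positivity)
  have hδle : δ ≤ ρ'/M := min_le_right _ _
  have hδlt : δ < ρ'^2 := lt_of_le_of_lt (min_le_left _ _) (by nlinarith)
  set ρ'' := Real.sqrt (ρ'^2 - δ) with hρ''def
  have hρ''sq : ρ''^2 = ρ'^2 - δ := Real.sq_sqrt (by linarith)
  have hρ''pos : 0 < ρ'' := Real.sqrt_pos.mpr (by linarith)
  have hρ''lt : ρ'' < ρ' := by nlinarith [hρ''sq, hρ''pos]
  set w : EuclideanSpace ℝ (Fin 4) → ℝ := fun x => 2*ρ'/(ρ'^2 - ‖x - x₀‖^2) with hwdef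
  set φ : EuclideanSpace ℝ (Fin 4) → ℝ := fun x => v x - w x with hφdef
  have hden : ∀ y ∈ closedBall x₀ ρ'', δ ≤ ρ'^2 - ‖y - x₀‖^2 := by
    intro y hy
    have h1 : ‖y - x₀‖ ≤ ρ'' := by rwa [mem_closedBall, dist_eq_norm] at hy
    have h2 : ‖y - x₀‖^2 ≤ ρ''^2 := pow_le_pow_left₀ (norm_nonneg _) h1 2
    nlinarith [hρ''sq]
  have hwcont : ContinuousOn w (closedBall x₀ ρ'') := by
    apply ContinuousOn.div continuousOn_const
    · exact (continuous_const.sub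
        (((continuous_id.sub continuous_const).norm).pow 2)).continuousOn
    · intro y hy
      exact ne_of_gt (lt_of_lt_of_le hδpos (hden y hy))
  have hsub2 : closedBall x₀ ρ'' ⊆ closedBall x₀ ρ' := closedBall_subset_closedBall hρ''lt.le
  have hφcont : ContinuousOn φ (closedBall x₀ ρ'') := (hvc.mono hsub2).sub hwcont
  obtain ⟨z, hz, hzmax⟩ := (isCompact_closedBall x₀ ρ'').exists_isMaxOn
    ⟨x₀, mem_closedBall_self hρ''pos.le⟩ hφcont
  have hwx₀ : w x₀ = 2/ρ' := by
    have h0 : ‖x₀ - x₀‖ = 0 := by simp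
    simp only [hwdef, h0]
    rw [show ρ'^2 - (0:ℝ)^2 = ρ'*ρ' by ring]
    field_simp
  have hφx₀pos : 0 < φ x₀ := by
    simp only [hφdef]
    rw [hwx₀]
    have : 2/ρ' < v x₀ := (div_lt_iff₀ hρ').mpr (by linarith)
    linarith
  have hφzx₀ : φ x₀ ≤ φ z := hzmax (mem_closedBall_self hρ''pos.le)
  have hzball : z ∈ ball x₀ ρ'' := by
    by_contra hzb
    have hzeq : ‖z - x₀‖ = ρ'' := by
      rw [mem_closedBall, dist_eq_norm] at hz
      rw [mem_ball, dist_eq_norm] at hzb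
      push_neg at hzb
      linarith
    have hwz : w z = 2*ρ'/δ := by
      simp only [hwdef, hzeq]
      congr 1
      rw [hρ''sq]; ring
    have hstep : 2*ρ'/(ρ'/M) ≤ 2*ρ'/δ := by
      gcongr
      all_goals first
      | positivity
      | exact hδle
    have hMeq : 2*ρ'/(ρ'/M) = 2*M := by field_simp
    have hvz : v z ≤ M := hxmax (hsub2 hz)
    have hφzneg : φ z ≤ -M := by
      simp only [hφdef]
      rw [hwz]
      linarith [hMeq ▸ hstep]
    linarith
  have hzρ : z ∈ ball x₀ ρ := (ball_subset_ball (by linarith : ρ'' ≤ ρ)) hzball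
  have hlocmax : IsLocalMax φ z := hzmax.isLocalMax
    (mem_of_superset (isOpen_ball.mem_nhds hzball) ball_subset_closedBall)
  set s0 := ‖z - x₀‖^2 with hs0
  set cden := ρ'^2 - s0 with hcden_def
  have hcden : 0 < cden := by
    rw [hcden_def, hs0]
    exact lt_of_lt_of_le hδpos (hden z hz)
  have hv2 : ContDiffAt ℝ 2 v z := hv.contDiffAt (isOpen_ball.mem_nhds hzρ)
  have hwline : ∀ (i : Fin 4) (t : ℝ),
      w (z + t • EuclideanSpace.single i (1:ℝ))
        = 2*ρ'/(cden - 2*((z - x₀) i)*t - t^2) := by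
    intro i t
    have hsplit : (z + t • EuclideanSpace.single i (1:ℝ)) - x₀
        = (z - x₀) + t • EuclideanSpace.single i (1:ℝ) := by abel
    have hinner : (inner ℝ (z - x₀) (EuclideanSpace.single i (1:ℝ)) : ℝ) = (z - x₀) i := by
      simp [EuclideanSpace.inner_single_right]
    simp only [hwdef, hsplit]
    rw [norm_add_sq_real, real_inner_smul_right, hinner, norm_smul,
      EuclideanSpace.norm_single]
    congr 1
    simp only [Real.norm_eq_abs, norm_one, mul_one]
    rw [sq_abs, hcden_def, hs0]
    ring
  have key : ∀ i : Fin 4,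
      iteratedFDeriv ℝ 2 v z
          ![EuclideanSpace.single i (1:ℝ), EuclideanSpace.single i (1:ℝ)]
        ≤ 4*ρ'/cden^2 + 16*ρ'*((z - x₀) i)^2/cden^3 := by
    intro i
    set e := EuclideanSpace.single i (1:ℝ) with he
    set b := (z - x₀) i with hb
    obtain ⟨hdv, hv2d⟩ := line_deriv_bridge e hv2
    obtain ⟨hdq, hq2d⟩ := q_second_deriv (r := ρ') (b := b) (c := cden) hcden
    have hlm : IsLocalMax (fun t : ℝ => v (z + t • e) - 2*ρ'/(cden - 2*b*t - t^2)) 0 := by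
      have htend : Tendsto (fun t : ℝ => z + t • e) (𝓝 0) (𝓝 z) := by
        have hco : Continuous (fun t : ℝ => z + t • e) :=
          continuous_const.add (continuous_id.smul continuous_const)
        have h := hco.tendsto 0
        simpa using h
      have hcomp := htend.eventually hlocmax
      have hfeq : ∀ t : ℝ, φ (z + t • e)
          = v (z + t • e) - 2*ρ'/(cden - 2*b*t - t^2) := by
        intro t
        simp only [hφdef]
        rw [hwline i t]
      refine Filter.Eventually.mono hcomp fun t ht => ?_
      show v (z + t • e) - 2*ρ'/(cden - 2*b*t - t^2)
          ≤ v (z + (0:ℝ) • e) - 2*ρ'/(cden - 2*b*0 - (0:ℝ)^2)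
      rw [← hfeq t, ← hfeq 0]
      simpa using ht
    have hgd : ∀ᶠ t in 𝓝 (0:ℝ), DifferentiableAt ℝ
        (fun t : ℝ => v (z + t • e) - 2*ρ'/(cden - 2*b*t - t^2)) t := by
      filter_upwards [hdv, hdq] with t h1 h2 using h1.sub h2
    have hder_eq : deriv (fun t : ℝ => v (z + t • e) - 2*ρ'/(cden - 2*b*t - t^2))
        =ᶠ[𝓝 (0:ℝ)] fun t => deriv (fun t : ℝ => v (z + t • e)) t
          - deriv (fun t : ℝ => 2*ρ'/(cden - 2*b*t - t^2)) t := by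
      filter_upwards [hdv, hdq] with t h1 h2 using deriv_sub h1 h2
    have hsum : HasDerivAt (fun t => deriv (fun t : ℝ => v (z + t • e)) t
          - deriv (fun t : ℝ => 2*ρ'/(cden - 2*b*t - t^2)) t)
        (iteratedFDeriv ℝ 2 v z ![e, e] - (4*ρ'/cden^2 + 16*ρ'*b^2/cden^3)) 0 :=
      hv2d.sub hq2d
    have hfinal := hsum.congr_of_eventuallyEq hder_eq
    have := second_deriv_test hlm hgd hfinal
    linarith
  have hlapz : lap v z ≤ 16*ρ'/cden^2 + 16*ρ'*s0/cden^3 := by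
    have hsumsq : ∑ i : Fin 4, ((z - x₀) i)^2 = s0 := sum_coord_sq (z - x₀)
    have hle : lap v z ≤ ∑ i : Fin 4, (4*ρ'/cden^2 + 16*ρ'*((z - x₀) i)^2/cden^3) := by
      rw [lap]
      exact Finset.sum_le_sum fun i _ => key i
    have h2 : ∑ i : Fin 4, 16*ρ'*((z - x₀) i)^2/cden^3 = 16*ρ'*s0/cden^3 := by
      rw [← hsumsq, Finset.mul_sum, Finset.sum_div]
    have heq : ∑ i : Fin 4, (4*ρ'/cden^2 + 16*ρ'*((z - x₀) i)^2/cden^3)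
        = 16*ρ'/cden^2 + 16*ρ'*s0/cden^3 := by
      rw [Finset.sum_add_distrib, Finset.sum_const, h2]
      simp only [Finset.card_univ, Fintype.card_fin, nsmul_eq_mul]
      ring
    linarith [heq ▸ hle]
  have hls : 2*(v z)^3 ≤ lap v z := hlap z hzρ
  have hwzval : w z = 2*ρ'/cden := by
    rw [hcden_def, hs0]
  have hwzpos : 0 < w z := by rw [hwzval]; positivity
  have hwz3 : 16*ρ'/cden^2 + 16*ρ'*s0/cden^3 = 2*(w z)^3 := by
    rw [hwzval]
    have hs : s0 = ρ'^2 - cden := by rw [hcden_def]; ring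
    rw [hs]
    field_simp
    ring
  have h3 : (v z)^3 ≤ (w z)^3 := by linarith
  have hvwz : v z ≤ w z := by
    by_contra hlt
    push_neg at hlt
    have := pow_lt_pow_left₀ hlt hwzpos.le (by norm_num : 3 ≠ 0)
    linarith
  have hφzle : φ z ≤ 0 := by simp only [hφdef]; linarith
  linarith

/-- **Maximum-principle bound (Euclidean model of Step 1 of the boundary blow-up
analysis).** There is a universal constant `C > 0` such that every positive `C²`
function `v` on a ball `B(x₀, ρ) ⊆ ℝ⁴` satisfying `Δv ≥ 2v³` there obeys
`v(x₀)·ρ ≤ C`. -/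
theorem maximum_principle_bound : ∃ C : ℝ, 0 < C ∧
    ∀ (x₀ : EuclideanSpace ℝ (Fin 4)) (ρ : ℝ) (v : EuclideanSpace ℝ (Fin 4) → ℝ),
      0 < ρ →
      ContDiffOn ℝ 2 v (Metric.ball x₀ ρ) →
      (∀ x ∈ Metric.ball x₀ ρ, 0 < v x) →
      (∀ x ∈ Metric.ball x₀ ρ, 2 * (v x) ^ 3 ≤ lap v x) →
      v x₀ * ρ ≤ C := by
  refine ⟨2, by norm_num, ?_⟩
  intro x₀ ρ v hρ hv hpos hlap
  by_contra hcon
  push_neg at hcon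
  have hv0 : 0 < v x₀ := hpos x₀ (Metric.mem_ball_self hρ)
  have h2ρ : 2 / v x₀ < ρ := (div_lt_iff₀' hv0).mpr hcon
  have hq : 0 < 2 / v x₀ := by positivity
  set ρ' := (2 / v x₀ + ρ) / 2 with hρ'def
  have h1 : 2 / v x₀ < ρ' := by rw [hρ'def]; linarith
  have h2 : ρ' < ρ := by rw [hρ'def]; linarith
  have h3 : 0 < ρ' := by rw [hρ'def]; linarith
  have hb := core_bound h3 h2 hv hpos hlap
  have : 2 < v x₀ * ρ' := by
    have := (div_lt_iff₀' hv0).mp h1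
    linarith
  linarith
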